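/- Let θ, a_i, a_j ∈ ℂ^N, let G_i and G_j be N × M complex matrices, and let x ∈ ℂ^M. Set Θ = diag(θ), Q = θθᴴ, A_{ij} = (conj(G_j)·G_iᵀ) ⊙ (a_i a_jᴴ)ᵀ and B_{ij} = (conj(a_j)·a_iᵀ) ⊙ (G_i x xᴴ G_jᴴ)ᵀ, where ⊙ is the Hadamard product. Define Ψ_{ij} = G_jᴴ·( (Qᵀ·A_{ij}ᵀ·conj(Q)) ⊙ (conj(a_j)·a_iᵀ) )·G_i, an M × M matrix. Then tr(Qᴴ·A_{ij}·Q·B_{ij}) = xᴴ·Ψ_{ij}·x. -/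
import Mathlib


open Matrix

lemma helper_stmt11 (N M : ℕ) (ai aj : Fin N → ℂ)
    (Gi Gj : Matrix (Fin N) (Fin M) ℂ) (x : Fin M → ℂ)
    (X : Matrix (Fin N) (Fin N) ℂ) :
    Matrix.trace (X * Matrix.hadamard (Matrix.vecMulVec (star aj) ai)
      (Matrix.vecMulVec (Gi *ᵥ x) (star (Gj *ᵥ x))).transpose) =
    star x ⬝ᵥ ((Gj.conjTranspose *
      Matrix.hadamard X.transpose (Matrix.vecMulVec (star aj) ai) * Gi) *ᵥ x) := by
  simp [trace, mul_apply, dotProduct, mulVec, hadamard, vecMulVec_apply, diag,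
    Finset.mul_sum, Finset.sum_mul, mul_comm, mul_left_comm, mul_assoc]
  conv_lhs => enter [2, n1]; rw [Finset.sum_comm]
  conv_lhs => enter [2, n1, 2, m3]; rw [Finset.sum_comm]
  rw [Finset.sum_comm]
  conv_lhs => enter [2, m3]; rw [Finset.sum_comm]

/-- with `Θ = diag(θ)`, `Q = θθᴴ`,
`A_{ij} = (conj(G_j)G_iᵀ) ⊙ (a_i a_jᴴ)ᵀ`, `B_{ij} = (conj(a_j)a_iᵀ) ⊙ (G_i x xᴴ G_jᴴ)ᵀ`,
and `Ψ_{ij} = G_jᴴ·((QᵀA_{ij}ᵀ conj(Q)) ⊙ (conj(a_j)a_iᵀ))·G_i`, one has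
`tr(Qᴴ·A_{ij}·Q·B_{ij}) = xᴴ·Ψ_{ij}·x`. -/
theorem stmt_11 (N M : ℕ) (θ ai aj : Fin N → ℂ)
    (Gi Gj : Matrix (Fin N) (Fin M) ℂ) (x : Fin M → ℂ)
    (Q : Matrix (Fin N) (Fin N) ℂ) (hQ : Q = Matrix.vecMulVec θ (star θ))
    (A : Matrix (Fin N) (Fin N) ℂ)
    (hA : A = Matrix.hadamard ((Gj.map (starRingEnd ℂ)) * Gi.transpose)
      (Matrix.vecMulVec ai (star aj)).transpose)
    (B : Matrix (Fin N) (Fin N) ℂ)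
    (hB : B = Matrix.hadamard (Matrix.vecMulVec (star aj) ai)
      (Matrix.vecMulVec (Gi *ᵥ x) (star (Gj *ᵥ x))).transpose)
    (Ψ : Matrix (Fin M) (Fin M) ℂ)
    (hΨ : Ψ = Gj.conjTranspose *
      Matrix.hadamard (Q.transpose * A.transpose * Q.map (starRingEnd ℂ))
        (Matrix.vecMulVec (star aj) ai) * Gi) :
    Matrix.trace (Q.conjTranspose * A * Q * B) = star x ⬝ᵥ (Ψ *ᵥ x) := by
  have hX : Q.transpose * A.transpose * Q.map (starRingEnd ℂ)
      = (Q.conjTranspose * A * Q).transpose := by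
    ext i j
    simp [transpose_mul, conjTranspose_apply, mul_apply, transpose_apply,
      Finset.mul_sum, Finset.sum_mul, mul_comm, mul_left_comm, mul_assoc]
  rw [hB, hΨ, hX]
  exact helper_stmt11 N M ai aj Gi Gj x (Q.conjTranspose * A * Q)
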